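/- Two 2-cocycles c, c' of a ℚ-Lie algebra g with values in ℚ define isomorphic Sridharan algebras U_c(g) ≅ U_{c'}(g) (as filtered algebras with g generating) if and only if c and c' are cohomologous. -/

import Mathlib

open TensorProduct

namespace Sridharan

variable (L : Type*) [LieRing L] [LieAlgebra ℚ L]

/-- `c` is a 2-cocycle of the `ℚ`-Lie algebra `L` with values in `ℚ`: an alternating bilinear
form with `c([x,y],z) + c([y,z],x) + c([z,x],y) = 0`. -/
def IsCocycle (c : L →ₗ[ℚ] L →ₗ[ℚ] ℚ) : Prop :=
  (∀ x : L, c x x = 0) ∧ ∀ x y z : L, c ⁅x, y⁆ z + c ⁅y, z⁆ x + c ⁅z, x⁆ y = 0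

/-- The defining relations of the Sridharan algebra `U_c(g) = T(g)/(xy - yx - [x,y] - c(x,y))`. -/
inductive Rel (c : L →ₗ[ℚ] L →ₗ[ℚ] ℚ) :
    TensorAlgebra ℚ L → TensorAlgebra ℚ L → Prop
  | rel (x y : L) : Rel c (TensorAlgebra.ι ℚ x * TensorAlgebra.ι ℚ y)
      (TensorAlgebra.ι ℚ y * TensorAlgebra.ι ℚ x + TensorAlgebra.ι ℚ ⁅x, y⁆
        + algebraMap ℚ (TensorAlgebra ℚ L) (c x y))

end Sridharan

/-- The Sridharan algebra `U_c(g)` associated to a 2-cocycle `c` of the `ℚ`-Lie algebra `g`: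
the quotient of the tensor algebra by the relations `xy - yx = [x,y] + c(x,y)`.
For `c = 0` this is the universal enveloping algebra `U(g)`. -/
def SridharanAlgebra (L : Type*) [LieRing L] [LieAlgebra ℚ L]
    (c : L →ₗ[ℚ] L →ₗ[ℚ] ℚ) : Type _ :=
  RingQuot (Sridharan.Rel L c)

namespace SridharanAlgebra

variable (L : Type*) [LieRing L] [LieAlgebra ℚ L] (c : L →ₗ[ℚ] L →ₗ[ℚ] ℚ)

instance : Ring (SridharanAlgebra L c) :=
  inferInstanceAs (Ring (RingQuot (Sridharan.Rel L c)))

instance : Algebra ℚ (SridharanAlgebra L c) :=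
  inferInstanceAs (Algebra ℚ (RingQuot (Sridharan.Rel L c)))

/-- The canonical linear map `g → U_c(g)`. -/
noncomputable def ι : L →ₗ[ℚ] SridharanAlgebra L c :=
  (RingQuot.mkAlgHom ℚ (Sridharan.Rel L c)).toLinearMap ∘ₗ TensorAlgebra.ι ℚ

end SridharanAlgebra

namespace SridharanNT

variable {L : Type*} [LieRing L] [LieAlgebra ℚ L]
variable {κ : Type*} [LinearOrder κ]

/-- Sorted words in the index type. -/
abbrev SW (κ : Type*) [LinearOrder κ] : Type _ := {l : List κ // l.IsChain (· ≤ ·)}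

/-- The free module on sorted words. -/
abbrev MM (κ : Type*) [LinearOrder κ] : Type _ := SW κ →₀ ℚ

/-- Number of inversions of a word. -/
def inv : List κ → ℕ
  | [] => 0
  | a :: l => l.countP (fun t => decide (t < a)) + inv l

@[simp] lemma inv_nil : inv ([] : List κ) = 0 := rfl

@[simp] lemma inv_cons (a : κ) (l : List κ) :
    inv (a :: l) = l.countP (fun t => decide (t < a)) + inv l := rfl

lemma inv_le_sq (l : List κ) : inv l ≤ l.length * l.length := by
  induction l with
  | nil => simp [inv]
  | cons a l ih =>
    have h1 : l.countP (fun t => decide (t < a)) ≤ l.length := List.countP_le_length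
    simp only [inv_cons, List.length_cons]
    nlinarith

/-- The measure used for termination and induction. -/
def mu (l : List κ) : ℕ := l.length * l.length * l.length + inv l

lemma mu_lt_of_length_lt {u v : List κ} (h : u.length < v.length) : mu u < mu v := by
  have h1 := inv_le_sq u
  have h2 : u.length + 1 ≤ v.length := h
  have h3 : (u.length + 1) * (u.length + 1) * (u.length + 1) ≤
      v.length * v.length * v.length := by
    have := Nat.mul_le_mul (Nat.mul_le_mul h2 h2) h2
    simpa using this
  unfold mu
  nlinarith

lemma mu_lt_of_inv_lt {u v : List κ} (h : u.length = v.length) (h2 : inv u < inv v) :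
    mu u < mu v := by
  unfold mu; rw [h]; omega

variable (c : L →ₗ[ℚ] L →ₗ[ℚ] ℚ) (b : Module.Basis κ ℚ L)

/-- One rewriting step at the first descent of a word, as a formal combination of words. -/
noncomputable def step : List κ → (List κ →₀ ℚ)
  | [] => 0
  | [_] => 0
  | i :: j :: v =>
    if i ≤ j then Finsupp.mapDomain (List.cons i) (step (j :: v))
    else Finsupp.single (j :: i :: v) 1
      + (b.repr ⁅b i, b j⁆).sum (fun k a => a • Finsupp.single (k :: v) 1)
      + c (b i) (b j) • Finsupp.single v 1

lemma step_le {i j : κ} (v : List κ) (hij : i ≤ j) :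
    step c b (i :: j :: v) = Finsupp.mapDomain (List.cons i) (step c b (j :: v)) := by
  rw [step, if_pos hij]

lemma step_gt {i j : κ} (v : List κ) (hij : j < i) :
    step c b (i :: j :: v) = Finsupp.single (j :: i :: v) 1
      + (b.repr ⁅b i, b j⁆).sum (fun k a => a • Finsupp.single (k :: v) 1)
      + c (b i) (b j) • Finsupp.single v 1 := by
  rw [step, if_neg (not_le.mpr hij)]

lemma step_support : ∀ {w u : List κ}, u ∈ (step c b w).support →
    (u.Perm w ∧ inv u < inv w) ∨ u.length < w.length := by
  intro w
  induction w with
  | nil => intro u hu; simp [step] at hu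
  | cons i t ih =>
    cases t with
    | nil => intro u hu; simp [step] at hu
    | cons j v =>
      intro u hu
      by_cases hij : i ≤ j
      · rw [step_le c b v hij] at hu
        obtain ⟨u', hu', rfl⟩ := Finset.mem_image.mp (Finsupp.mapDomain_support hu)
        rcases ih hu' with ⟨hperm, hinv⟩ | hlen
        · left
          refine ⟨hperm.cons i, ?_⟩
          simp only [inv_cons, hperm.countP_eq] at hinv ⊢
          omega
        · right; simpa using hlen
      · push_neg at hij
        rw [step_gt c b v hij] at hu
        have hu' := Finsupp.support_add hu
        rw [Finset.mem_union] at hu'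
        rcases hu' with hu' | hu'
        · have hu'' := Finsupp.support_add hu'
          rw [Finset.mem_union] at hu''
          rcases hu'' with hu'' | hu''
          · -- swap term
            have : u = j :: i :: v := by
              have := Finsupp.support_single_subset hu''
              simpa using this
            subst this
            left
            constructor
            · exact List.Perm.swap i j v
            · simp only [inv_cons, List.countP_cons, decide_eq_true_eq,
                if_pos hij, if_neg (not_lt.mpr hij.le)]
              omega
          · -- bracket terms
            have := Finsupp.support_sum hu''
            rw [Finset.mem_biUnion] at this
            obtain ⟨k, _, hk⟩ := this
            have hk2 : u ∈ (Finsupp.single (k :: v) (1:ℚ)).support := by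
              have := Finsupp.support_smul (b := (b.repr ⁅b i, b j⁆) k) hk
              exact this
            have : u = k :: v := by
              have := Finsupp.support_single_subset hk2
              simpa using this
            subst this
            right; simp
        · -- scalar term
          have hk2 : u ∈ (Finsupp.single v (1:ℚ)).support :=
            Finsupp.support_smul hu'
          have : u = v := by
            have := Finsupp.support_single_subset hk2
            simpa using this
          subst this
          right; simp

lemma step_mu {w u : List κ} (hu : u ∈ (step c b w).support) : mu u < mu w := by
  rcases step_support c b hu with ⟨hperm, hinv⟩ | hlen
  · exact mu_lt_of_inv_lt hperm.length_eq hinv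
  · exact mu_lt_of_length_lt hlen

lemma step_mu_cons {w u : List κ} (hu : u ∈ (step c b w).support) (p : List κ) :
    mu (p ++ u) < mu (p ++ w) := by
  rcases step_support c b hu with ⟨hperm, hinv⟩ | hlen
  · refine mu_lt_of_inv_lt (by simp [hperm.length_eq]) ?_
    induction p with
    | nil => simpa using hinv
    | cons a p ihp =>
      simp only [List.cons_append, inv_cons]
      have : (p ++ u).countP (fun t => decide (t < a))
          = (p ++ w).countP (fun t => decide (t < a)) :=
        ((hperm.append_left p).countP_eq _)
      omega
  · refine mu_lt_of_length_lt ?_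
    simp [hlen]


/-- Full normalization of a word into a combination of sorted words. -/
noncomputable def red : List κ → MM κ := fun w =>
  if hw : w.IsChain (· ≤ ·) then Finsupp.single ⟨w, hw⟩ 1
  else ∑ u ∈ (step c b w).support.attach, (step c b w) u.1 • red u.1
  termination_by w => mu w
  decreasing_by exact step_mu c b u.2

lemma red_sorted {w : List κ} (hw : w.IsChain (· ≤ ·)) :
    red c b w = Finsupp.single ⟨w, hw⟩ 1 := by
  rw [red, dif_pos hw]

/-- Evaluation of formal combinations of raw words through `red`. -/
noncomputable def E : (List κ →₀ ℚ) →ₗ[ℚ] MM κ :=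
  Finsupp.linearCombination ℚ (red c b)

@[simp] lemma E_single (u : List κ) (a : ℚ) :
    E c b (Finsupp.single u a) = a • red c b u :=
  Finsupp.linearCombination_single ℚ _ _

lemma red_unsorted {w : List κ} (hw : ¬ w.IsChain (· ≤ ·)) :
    red c b w = E c b (step c b w) := by
  rw [red, dif_neg hw, E, Finsupp.linearCombination_apply, Finsupp.sum,
    ← Finset.sum_attach ((step c b w).support) (fun u => (step c b w) u • red c b u)]

/-- Left multiplication by the `i`-th basis vector. -/
noncomputable def Lop (i : κ) : MM κ →ₗ[ℚ] MM κ :=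
  Finsupp.linearCombination ℚ (fun w : SW κ => red c b (i :: w.1))

@[simp] lemma Lop_single (i : κ) (w : SW κ) (a : ℚ) :
    Lop c b i (Finsupp.single w a) = a • red c b (i :: w.1) :=
  Finsupp.linearCombination_single ℚ _ _

/-- The action of a general element of `L`. -/
noncomputable def rho : L →ₗ[ℚ] Module.End ℚ (MM κ) :=
  (Finsupp.linearCombination ℚ (Lop c b)).comp (b.repr : L →ₗ[ℚ] (κ →₀ ℚ))

@[simp] lemma rho_basis (p : κ) : rho c b (b p) = Lop c b p := by
  simp [rho, Module.Basis.repr_self]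

lemma rho_apply (z : L) (m : MM κ) :
    rho c b z m = (b.repr z).sum fun k a => a • Lop c b k m := by
  rw [rho, LinearMap.comp_apply, Finsupp.linearCombination_apply]
  rw [LinearMap.finsupp_sum_apply]
  simp [Finsupp.sum]

lemma rho_red (z : L) (u : List κ) (h5 : ∀ k, red c b (k :: u) = Lop c b k (red c b u)) :
    (b.repr z).sum (fun k a => a • red c b (k :: u)) = rho c b z (red c b u) := by
  rw [rho_apply]
  exact Finsupp.sum_congr fun k _ => by rw [h5 k]

/-- The key expansion of `red` at a descent. -/
lemma red_gt {i j : κ} (v : List κ) (hij : j < i) :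
    red c b (i :: j :: v) = red c b (j :: i :: v)
      + (b.repr ⁅b i, b j⁆).sum (fun k a => a • red c b (k :: v))
      + c (b i) (b j) • red c b v := by
  have hns : ¬ (i :: j :: v).IsChain (· ≤ ·) := by
    rw [List.isChain_cons_cons]
    rintro ⟨h1, -⟩
    exact absurd h1 (not_le.mpr hij)
  rw [red_unsorted c b hns, step_gt c b v hij]
  rw [map_add, map_add, map_smul, map_finsuppSum]
  simp only [E_single, map_smul, one_smul]

lemma inv_swap_head {x i : κ} (hxi : x < i) (l : List κ) :
    inv (x :: i :: l) < inv (i :: x :: l) := by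
  simp only [inv_cons, List.countP_cons, decide_eq_true_eq,
    if_pos hxi, if_neg (not_lt.mpr hxi.le)]
  omega

lemma c_skew (halt : ∀ x : L, c x x = 0) (x y : L) : c y x = - c x y := by
  have h := halt (x + y)
  simp only [map_add, LinearMap.add_apply, halt x, halt y] at h
  linarith

/-- The basic commutation relation, assuming the needed instances of `red_cons`. -/
lemma comm_aux {p q : κ} (hqp : q < p) (u : List κ)
    (h1 : red c b (q :: u) = Lop c b q (red c b u))
    (h2 : red c b (p :: q :: u) = Lop c b p (red c b (q :: u)))
    (h3 : red c b (p :: u) = Lop c b p (red c b u))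
    (h4 : red c b (q :: p :: u) = Lop c b q (red c b (p :: u)))
    (h5 : ∀ k, red c b (k :: u) = Lop c b k (red c b u)) :
    Lop c b p (Lop c b q (red c b u)) = Lop c b q (Lop c b p (red c b u))
      + rho c b ⁅b p, b q⁆ (red c b u) + c (b p) (b q) • red c b u := by
  rw [← h1, ← h2, red_gt c b u hqp, h4, h3, rho_red c b _ u h5]

/-- The commutation relation for any pair of indices, assuming `red_cons` instances for all
words of length at most `t.length + 2`. -/
lemma comm_len_aux (halt : ∀ x : L, c x x = 0) (p q : κ) (t : List κ)
    (hC : ∀ (j : κ) (s : List κ), s.length ≤ t.length + 1 →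
      red c b (j :: s) = Lop c b j (red c b s)) :
    Lop c b p (Lop c b q (red c b t)) = Lop c b q (Lop c b p (red c b t))
      + rho c b ⁅b p, b q⁆ (red c b t) + c (b p) (b q) • red c b t := by
  rcases lt_trichotomy q p with hqp | rfl | hpq
  · exact comm_aux c b hqp t (hC q t (by omega)) (hC p (q :: t) (by simp))
      (hC p t (by omega)) (hC q (p :: t) (by simp)) (fun k => hC k t (by omega))
  · simp [lie_self, halt]
  · have h := comm_aux c b hpq t (hC p t (by omega)) (hC q (p :: t) (by simp))
      (hC q t (by omega)) (hC p (q :: t) (by simp)) (fun k => hC k t (by omega))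
    have hskew : rho c b ⁅b p, b q⁆ (red c b t) = - rho c b ⁅b q, b p⁆ (red c b t) := by
      rw [← lie_skew (b p) (b q), map_neg, LinearMap.neg_apply]
    have hcs : c (b p) (b q) = - c (b q) (b p) := c_skew c halt _ _
    rw [hskew, hcs]
    linear_combination (norm := module) -h

/-- Commutation of `Lop p` with `rho z` for a general vector `z`, given the basis case. -/
lemma comm_vec (p : κ) (m : MM κ)
    (hbase : ∀ q : κ, Lop c b p (Lop c b q m) = Lop c b q (Lop c b p m)
      + rho c b ⁅b p, b q⁆ m + c (b p) (b q) • m) (z : L) :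
    Lop c b p (rho c b z m) = rho c b z (Lop c b p m)
      + rho c b ⁅b p, z⁆ m + c (b p) z • m := by
  have hext : (Lop c b p) ∘ₗ ((LinearMap.applyₗ m) ∘ₗ (rho c b))
      = (LinearMap.applyₗ (Lop c b p m)) ∘ₗ (rho c b)
        + (LinearMap.applyₗ m) ∘ₗ ((rho c b) ∘ₗ ((LieAlgebra.ad ℚ L) (b p)))
        + LinearMap.smulRight (c (b p)) m := by
    apply b.ext
    intro q
    simp only [LinearMap.comp_apply, LinearMap.add_apply, LinearMap.applyₗ,
      LinearMap.coe_mk, AddHom.coe_mk, LieAlgebra.ad_apply, LinearMap.smulRight_apply, rho_basis]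
    exact hbase q
  have := LinearMap.congr_fun hext z
  exact this

theorem red_cons (halt : ∀ x : L, c x x = 0)
    (hcoc : ∀ x y z : L, c ⁅x, y⁆ z + c ⁅y, z⁆ x + c ⁅z, x⁆ y = 0) :
    ∀ (i : κ) (w : List κ), red c b (i :: w) = Lop c b i (red c b w) := by
  suffices H : ∀ (n : ℕ) (i : κ) (w : List κ), mu (i :: w) ≤ n →
      red c b (i :: w) = Lop c b i (red c b w) by
    exact fun i w => H (mu (i :: w)) i w le_rfl
  intro n
  induction n with
  | zero =>
    intro i w h
    exfalso
    have h1 : 0 < (i :: w).length * (i :: w).length * (i :: w).length := by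
      have : 0 < (i :: w).length := by simp
      positivity
    have h2 : mu (i :: w) = (i :: w).length * (i :: w).length * (i :: w).length
        + inv (i :: w) := rfl
    omega
  | succ n IH =>
    intro i w hn
    have C : ∀ (j : κ) (t : List κ), mu (j :: t) < mu (i :: w) →
        red c b (j :: t) = Lop c b j (red c b t) :=
      fun j t h => IH j t (by omega)
    have Clen : ∀ (j : κ) (t : List κ), t.length + 1 ≤ w.length →
        red c b (j :: t) = Lop c b j (red c b t) := by
      intro j t h
      refine C j t (mu_lt_of_length_lt ?_)
      simp only [List.length_cons]
      omega
    by_cases hw : w.IsChain (· ≤ ·)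
    · rw [red_sorted c b hw, Lop_single, one_smul]
    · cases w with
      | nil => exact absurd List.isChain_nil hw
      | cons x w' =>
        by_cases hix : i ≤ x
        · -- the first descent is inside `x :: w'`
          have hiw : ¬ (i :: x :: w').IsChain (· ≤ ·) := by
            rw [List.isChain_cons_cons]
            rintro ⟨-, h2⟩
            exact hw h2
          rw [red_unsorted c b hiw, step_le c b w' hix, red_unsorted c b hw]
          simp only [E]
          rw [Finsupp.linearCombination_mapDomain, Finsupp.apply_linearCombination,
            Finsupp.linearCombination_apply, Finsupp.linearCombination_apply]
          refine Finsupp.sum_congr fun u hu => ?_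
          have hC := C i u (by simpa using step_mu_cons c b hu [i])
          simp only [Function.comp_apply, hC]
        · push_neg at hix
          cases w' with
          | nil => exact absurd (List.isChain_singleton x) hw
          | cons y v =>
            by_cases hxy : x ≤ y
            · -- descent at the head of `i :: x :: y :: v` and inside `x :: y :: v`
              have hyv : ¬ (y :: v).IsChain (· ≤ ·) := by
                intro h2
                exact hw (List.isChain_cons_cons.mpr ⟨hxy, h2⟩)
              rw [red_gt c b (y :: v) hix]
              have e6 : red c b (x :: i :: y :: v) = Lop c b x (red c b (i :: y :: v)) :=
                C x (i :: y :: v) (mu_lt_of_inv_lt (by simp) (inv_swap_head hix _))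
              have e5 : red c b (i :: y :: v) = Lop c b i (red c b (y :: v)) :=
                Clen i (y :: v) (by simp)
              have e7k : ∀ k, red c b (k :: y :: v) = Lop c b k (red c b (y :: v)) :=
                fun k => Clen k (y :: v) (by simp)
              rw [e6, e5, rho_red c b _ _ e7k]
              rw [red_unsorted c b hw, step_le c b v hxy, red_unsorted c b hyv]
              simp only [E]
              rw [Finsupp.linearCombination_mapDomain]
              simp only [Finsupp.apply_linearCombination]
              simp only [Finsupp.linearCombination_apply]
              rw [Finsupp.smul_sum]
              rw [← Finsupp.sum_add, ← Finsupp.sum_add]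
              refine Finsupp.sum_congr fun u hu => ?_
              have hulen : u.length ≤ v.length + 1 := by
                rcases step_support c b hu with ⟨hperm, -⟩ | hlen
                · simp [hperm.length_eq]
                · simp at hlen; omega
              have h1 : red c b (x :: u) = Lop c b x (red c b u) :=
                Clen x u (by simp; omega)
              have h2 : red c b (i :: x :: u) = Lop c b i (red c b (x :: u)) :=
                C i (x :: u) (by simpa using step_mu_cons c b hu [i, x])
              have h3 : red c b (i :: u) = Lop c b i (red c b u) :=
                Clen i u (by simp; omega)
              have h4 : red c b (x :: i :: u) = Lop c b x (red c b (i :: u)) := by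
                refine C x (i :: u) (lt_trans (mu_lt_of_inv_lt (by simp) (inv_swap_head hix u))
                  ?_)
                simpa using step_mu_cons c b hu [i, x]
              have h5 : ∀ k, red c b (k :: u) = Lop c b k (red c b u) :=
                fun k => Clen k u (by simp; omega)
              have hcomm := comm_aux c b hix u h1 h2 h3 h4 h5
              simp only [Function.comp_apply]
              rw [h1, hcomm]
              module
            · push_neg at hxy
              -- the Jacobi case: y < x < i
              rw [red_gt c b (y :: v) hix, red_gt c b v hxy]
              have e1 : red c b (y :: v) = Lop c b y (red c b v) := Clen y v (by simp)
              have e2 : red c b (x :: v) = Lop c b x (red c b v) := Clen x v (by simp)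
              have e3 : red c b (i :: v) = Lop c b i (red c b v) := Clen i v (by simp)
              have e4 : red c b (y :: x :: v) = Lop c b y (red c b (x :: v)) :=
                Clen y (x :: v) (by simp)
              have e5 : red c b (i :: y :: v) = Lop c b i (red c b (y :: v)) :=
                Clen i (y :: v) (by simp)
              have e6 : red c b (x :: i :: y :: v) = Lop c b x (red c b (i :: y :: v)) :=
                C x (i :: y :: v) (mu_lt_of_inv_lt (by simp) (inv_swap_head hix _))
              have e7k : ∀ k, red c b (k :: y :: v) = Lop c b k (red c b (y :: v)) :=
                fun k => Clen k (y :: v) (by simp)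
              have e8k : ∀ k, red c b (k :: v) = Lop c b k (red c b v) :=
                fun k => Clen k v (by simp)
              rw [rho_red c b _ _ e7k, rho_red c b _ _ e8k, e6, e5, e4, e2, e1]
              simp only [map_add, map_smul]
              -- now everything is expressed via `Lop` and `rho` applied to `m := red c b v`
              set m := red c b v with hm
              have hCv' : ∀ (j : κ) (s : List κ), s.length ≤ v.length + 1 →
                  red c b (j :: s) = Lop c b j (red c b s) :=
                fun j s h => Clen j s (by simp; omega)
              have K1 := comm_len_aux c b halt i y v hCv'
              have K3 := comm_len_aux c b halt i x v hCv'
              have K1' := congrArg (Lop c b x) K1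
              simp only [map_add, map_smul] at K1'
              have K3' := congrArg (Lop c b y) K3
              simp only [map_add, map_smul] at K3'
              -- K2 : commutation of x,y at `red (i::v)`
              have K2 := comm_aux c b hxy (i :: v)
                (hCv' y (i :: v) (by simp))
                (C x (y :: i :: v) ?hxyiv)
                (hCv' x (i :: v) (by simp))
                (C y (x :: i :: v) ?hyxiv)
                (fun k => hCv' k (i :: v) (by simp))
              rw [e3] at K2
              -- K4 : commutation of i,y at `red (x::v)`
              have K4 := comm_aux c b (lt_trans hxy hix) (x :: v)
                (hCv' y (x :: v) (by simp))
                (C i (y :: x :: v) ?hiyxv)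
                (hCv' i (x :: v) (by simp))
                (C y (i :: x :: v) ?hyixv)
                (fun k => hCv' k (x :: v) (by simp))
              rw [e2] at K4
              have hbase : ∀ p : κ, ∀ q : κ, Lop c b p (Lop c b q m) = Lop c b q (Lop c b p m)
                  + rho c b ⁅b p, b q⁆ m + c (b p) (b q) • m :=
                fun p q => comm_len_aux c b halt p q v hCv'
              have V1 := comm_vec c b x m (hbase x) ⁅b i, b y⁆
              have V2 := comm_vec c b y m (hbase y) ⁅b i, b x⁆
              have V3 := comm_vec c b i m (hbase i) ⁅b x, b y⁆
              have hbr : ⁅b x, ⁅b i, b y⁆⁆ = ⁅b y, ⁅b i, b x⁆⁆ + ⁅b i, ⁅b x, b y⁆⁆ := by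
                rw [leibniz_lie (b i) (b x) (b y)]
                rw [show ⁅⁅b i, b x⁆, b y⁆ = -⁅b y, ⁅b i, b x⁆⁆ from (lie_skew _ _).symm]
                abel
              have hJv : rho c b ⁅b x, ⁅b i, b y⁆⁆ m
                  = rho c b ⁅b y, ⁅b i, b x⁆⁆ m + rho c b ⁅b i, ⁅b x, b y⁆⁆ m := by
                rw [hbr, map_add, LinearMap.add_apply]
              have hCs : c (b x) ⁅b i, b y⁆ = c (b y) ⁅b i, b x⁆ + c (b i) ⁅b x, b y⁆ := by
                have hco := hcoc (b i) (b x) (b y)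
                have s1 : c ⁅b y, b i⁆ (b x) = - c ⁅b i, b y⁆ (b x) := by
                  rw [show ⁅b y, b i⁆ = -⁅b i, b y⁆ from (lie_skew _ _).symm]
                  rw [map_neg, LinearMap.neg_apply]
                have s2 : c (b x) ⁅b i, b y⁆ = - c ⁅b i, b y⁆ (b x) := c_skew c halt _ _
                have s3 : c (b y) ⁅b i, b x⁆ = - c ⁅b i, b x⁆ (b y) := c_skew c halt _ _
                have s4 : c (b i) ⁅b x, b y⁆ = - c ⁅b x, b y⁆ (b i) := c_skew c halt _ _
                rw [s1] at hco
                rw [s2, s3, s4]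
                linarith
              have hCv2 : c (b x) ⁅b i, b y⁆ • m
                  = c (b y) ⁅b i, b x⁆ • m + c (b i) ⁅b x, b y⁆ • m := by
                rw [hCs, add_smul]
              linear_combination (norm := module) K1' + K2 - K3' - K4 + V1 - V2 - V3 + hJv + hCv2
              case hxyiv =>
                refine mu_lt_of_inv_lt (by simp) ?_
                simp only [inv_cons, List.countP_cons, decide_eq_true_eq]
                have o1 : ¬ (x < y) := not_lt.mpr hxy.le
                have o2 : ¬ (i < x) := not_lt.mpr hix.le
                have o3 : ¬ (i < y) := not_lt.mpr (lt_trans hxy hix).le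
                simp only [if_pos hxy, if_pos hix, if_pos (lt_trans hxy hix),
                  if_neg o1, if_neg o2, if_neg o3]
                omega
              case hyxiv =>
                refine mu_lt_of_inv_lt (by simp) ?_
                simp only [inv_cons, List.countP_cons, decide_eq_true_eq]
                have o1 : ¬ (x < y) := not_lt.mpr hxy.le
                have o2 : ¬ (i < x) := not_lt.mpr hix.le
                have o3 : ¬ (i < y) := not_lt.mpr (lt_trans hxy hix).le
                simp only [if_pos hxy, if_pos hix, if_pos (lt_trans hxy hix),
                  if_neg o1, if_neg o2, if_neg o3]
                omega
              case hiyxv =>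
                refine mu_lt_of_inv_lt (by simp) ?_
                simp only [inv_cons, List.countP_cons, decide_eq_true_eq]
                have o1 : ¬ (x < y) := not_lt.mpr hxy.le
                have o2 : ¬ (i < x) := not_lt.mpr hix.le
                have o3 : ¬ (i < y) := not_lt.mpr (lt_trans hxy hix).le
                simp only [if_pos hxy, if_pos hix, if_pos (lt_trans hxy hix),
                  if_neg o1, if_neg o2, if_neg o3]
                omega
              case hyixv =>
                refine mu_lt_of_inv_lt (by simp) ?_
                simp only [inv_cons, List.countP_cons, decide_eq_true_eq]
                have o1 : ¬ (x < y) := not_lt.mpr hxy.le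
                have o2 : ¬ (i < x) := not_lt.mpr hix.le
                have o3 : ¬ (i < y) := not_lt.mpr (lt_trans hxy hix).le
                simp only [if_pos hxy, if_pos hix, if_pos (lt_trans hxy hix),
                  if_neg o1, if_neg o2, if_neg o3]
                omega

/-- The commutation relation on arbitrary reduced elements. -/
lemma comm_global (halt : ∀ x : L, c x x = 0)
    (hcoc : ∀ x y z : L, c ⁅x, y⁆ z + c ⁅y, z⁆ x + c ⁅z, x⁆ y = 0) (p q : κ) (t : List κ) :
    Lop c b p (Lop c b q (red c b t)) = Lop c b q (Lop c b p (red c b t))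
      + rho c b ⁅b p, b q⁆ (red c b t) + c (b p) (b q) • red c b t :=
  comm_len_aux c b halt p q t (fun j s _ => red_cons c b halt hcoc j s)

/-- The commutation relation as an identity of operators, for basis indices. -/
lemma opEq_basis (halt : ∀ x : L, c x x = 0)
    (hcoc : ∀ x y z : L, c ⁅x, y⁆ z + c ⁅y, z⁆ x + c ⁅z, x⁆ y = 0) (p q : κ) :
    (Lop c b p) ∘ₗ (Lop c b q) = (Lop c b q) ∘ₗ (Lop c b p)
      + rho c b ⁅b p, b q⁆ + c (b p) (b q) • (LinearMap.id (R := ℚ) (M := MM κ)) := by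
  apply Finsupp.lhom_ext
  intro w r
  have hredw : red c b w.1 = Finsupp.single w 1 := by
    rw [red_sorted c b w.2]
  have hsingle : Finsupp.single w r = r • Finsupp.single w (1 : ℚ) := by
    rw [Finsupp.smul_single, smul_eq_mul, mul_one]
  simp only [LinearMap.comp_apply, LinearMap.add_apply, LinearMap.smul_apply,
    LinearMap.id_apply, hsingle, ← hredw, map_smul]
  rw [comm_global c b halt hcoc p q w.1]

/-- The commutation relation as an identity of operators, for arbitrary vectors. -/
lemma opEq (halt : ∀ x : L, c x x = 0)
    (hcoc : ∀ x y z : L, c ⁅x, y⁆ z + c ⁅y, z⁆ x + c ⁅z, x⁆ y = 0) (x y : L) :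
    (rho c b x) * (rho c b y) = (rho c b y) * (rho c b x)
      + rho c b ⁅x, y⁆ + c x y • (1 : Module.End ℚ (MM κ)) := by
  have step1 : ∀ (p : κ) (y : L), (rho c b (b p)) * (rho c b y) = (rho c b y) * (rho c b (b p))
      + rho c b ⁅b p, y⁆ + c (b p) y • (1 : Module.End ℚ (MM κ)) := by
    intro p y
    have hext : (LinearMap.mulLeft ℚ (rho c b (b p))) ∘ₗ (rho c b)
        = (LinearMap.mulRight ℚ (rho c b (b p))) ∘ₗ (rho c b)
          + (rho c b) ∘ₗ ((LieAlgebra.ad ℚ L) (b p))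
          + LinearMap.smulRight (c (b p)) (1 : Module.End ℚ (MM κ)) := by
      apply b.ext
      intro q
      simp only [LinearMap.comp_apply, LinearMap.add_apply, LinearMap.mulLeft_apply,
        LinearMap.mulRight_apply, LieAlgebra.ad_apply, LinearMap.smulRight_apply, rho_basis]
      rw [Module.End.mul_eq_comp, Module.End.mul_eq_comp, opEq_basis c b halt hcoc p q]
      rfl
    have := LinearMap.congr_fun hext y
    simpa only [LinearMap.comp_apply, LinearMap.add_apply, LinearMap.mulLeft_apply,
      LinearMap.mulRight_apply, LieAlgebra.ad_apply, LinearMap.smulRight_apply] using this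
  have hext2 : (LinearMap.mulRight ℚ (rho c b y)) ∘ₗ (rho c b)
      = (LinearMap.mulLeft ℚ (rho c b y)) ∘ₗ (rho c b)
        + (rho c b) ∘ₗ (-((LieAlgebra.ad ℚ L) y : L →ₗ[ℚ] L))
        + LinearMap.smulRight (c.flip y) (1 : Module.End ℚ (MM κ)) := by
    apply b.ext
    intro p
    simp only [LinearMap.comp_apply, LinearMap.add_apply, LinearMap.mulLeft_apply,
      LinearMap.mulRight_apply, LinearMap.neg_apply, LieAlgebra.ad_apply,
      LinearMap.smulRight_apply, LinearMap.flip_apply, map_neg]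
    have := step1 p y
    rw [show ⁅y, b p⁆ = -⁅b p, y⁆ from neg_eq_iff_eq_neg.mp (lie_skew _ _), map_neg, neg_neg]
    linear_combination (norm := module) this
  have := LinearMap.congr_fun hext2 x
  simp only [LinearMap.comp_apply, LinearMap.add_apply, LinearMap.mulLeft_apply,
    LinearMap.mulRight_apply, LinearMap.neg_apply, LieAlgebra.ad_apply,
    LinearMap.smulRight_apply, LinearMap.flip_apply, map_neg] at this
  rw [show ⁅y, x⁆ = -⁅x, y⁆ from neg_eq_iff_eq_neg.mp (lie_skew _ _), map_neg, neg_neg] at this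
  linear_combination (norm := module) this

end SridharanNT

namespace SridharanAux
open SridharanAlgebra

variable {L : Type*} [LieRing L] [LieAlgebra ℚ L]

lemma ι_apply (c : L →ₗ[ℚ] L →ₗ[ℚ] ℚ) (x : L) :
    ι L c x = RingQuot.mkAlgHom ℚ (Sridharan.Rel L c) (TensorAlgebra.ι ℚ x) := rfl

lemma rel_eq (c : L →ₗ[ℚ] L →ₗ[ℚ] ℚ) (x y : L) :
    ι L c x * ι L c y = ι L c y * ι L c x + ι L c ⁅x, y⁆
      + algebraMap ℚ (SridharanAlgebra L c) (c x y) := by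
  have h := RingQuot.mkAlgHom_rel ℚ (Sridharan.Rel.rel (c := c) x y)
  simp only [map_mul, map_add, AlgHom.commutes] at h
  exact h

/-- Nontriviality of the Sridharan algebra of a 2-cocycle, via the explicit
representation on the free module over sorted words in a well-ordered basis. -/
lemma nontrivial_of_isCocycle (c : L →ₗ[ℚ] L →ₗ[ℚ] ℚ) (hc : Sridharan.IsCocycle L c) :
    Nontrivial (SridharanAlgebra L c) := by
  classical
  letI : LinearOrder (Module.Basis.ofVectorSpaceIndex ℚ L) :=
    @linearOrderOfSTO _ WellOrderingRel _ (Classical.decRel _)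
  set b := Module.Basis.ofVectorSpace ℚ L with hb
  have hrel : ∀ ⦃u v : TensorAlgebra ℚ L⦄, Sridharan.Rel L c u v →
      TensorAlgebra.lift ℚ (SridharanNT.rho c b) u
        = TensorAlgebra.lift ℚ (SridharanNT.rho c b) v := by
    rintro _ _ ⟨x, y⟩
    simp only [map_mul, map_add, TensorAlgebra.lift_ι_apply, AlgHom.commutes]
    rw [Module.algebraMap_end_eq_smul_id]
    have h := SridharanNT.opEq c b hc.1 hc.2 x y
    simpa only [Module.End.one_eq_id] using h
  let G : SridharanAlgebra L c →ₐ[ℚ] Module.End ℚ (SridharanNT.MM (Module.Basis.ofVectorSpaceIndex ℚ L)) :=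
    RingQuot.liftAlgHom ℚ ⟨TensorAlgebra.lift ℚ (SridharanNT.rho c b), hrel⟩
  refine ⟨0, 1, fun h01 => ?_⟩
  have h2 := congrArg G h01
  rw [map_zero, map_one] at h2
  have h3 := LinearMap.congr_fun h2
    (Finsupp.single (⟨[], List.isChain_nil⟩ : SridharanNT.SW (Module.Basis.ofVectorSpaceIndex ℚ L)) (1 : ℚ))
  simp only [LinearMap.zero_apply, Module.End.one_eq_id, LinearMap.id_apply] at h3
  exact one_ne_zero (Finsupp.single_eq_zero.mp h3.symm)

noncomputable def toHom (c c' : L →ₗ[ℚ] L →ₗ[ℚ] ℚ) (b : L →ₗ[ℚ] ℚ)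
    (hb : ∀ x y, c x y - c' x y = b ⁅x, y⁆) :
    SridharanAlgebra L c →ₐ[ℚ] SridharanAlgebra L c' :=
  RingQuot.liftAlgHom ℚ ⟨TensorAlgebra.lift ℚ
      (ι L c' - (Algebra.linearMap ℚ (SridharanAlgebra L c')).comp b), by
    rintro _ _ ⟨x, y⟩
    have h1 : ∀ (r : ℚ) (z : SridharanAlgebra L c'), z * algebraMap ℚ _ r = r • z := fun r z => by
      rw [← Algebra.commutes, ← Algebra.smul_def]
    have h2 : ∀ (r : ℚ) (z : SridharanAlgebra L c'), algebraMap ℚ _ r * z = r • z := fun r z => by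
      rw [← Algebra.smul_def]
    simp only [map_mul, map_add, TensorAlgebra.lift_ι_apply, LinearMap.sub_apply,
      LinearMap.comp_apply, Algebra.linearMap_apply, AlgHom.commutes]
    simp only [sub_mul, mul_sub]
    rw [rel_eq c' x y]
    rw [show (c x y : ℚ) = c' x y + b ⁅x, y⁆ by have := hb x y; linarith]
    simp only [map_add, Algebra.algebraMap_eq_smul_one, smul_mul_assoc, mul_smul_comm,
      smul_smul, one_mul, mul_one, smul_sub, smul_add]
    module⟩

lemma toHom_ι (c c' : L →ₗ[ℚ] L →ₗ[ℚ] ℚ) (b : L →ₗ[ℚ] ℚ)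
    (hb : ∀ x y, c x y - c' x y = b ⁅x, y⁆) (x : L) :
    toHom c c' b hb (ι L c x) = ι L c' x
      - algebraMap ℚ (SridharanAlgebra L c') (b x) := by
  rw [ι_apply, toHom]
  erw [RingQuot.liftAlgHom_mkAlgHom_apply]
  simp [TensorAlgebra.lift_ι_apply]

lemma hom_ext {c : L →ₗ[ℚ] L →ₗ[ℚ] ℚ} {A : Type*} [Semiring A] [Algebra ℚ A]
    {f g : SridharanAlgebra L c →ₐ[ℚ] A}
    (h : ∀ x, f (ι L c x) = g (ι L c x)) : f = g := by
  apply RingQuot.ringQuot_ext'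
  apply TensorAlgebra.hom_ext
  ext x
  exact h x

end SridharanAux

namespace SridharanAux
open SridharanAlgebra

variable {L : Type*} [LieRing L] [LieAlgebra ℚ L]

noncomputable def toEquiv (c c' : L →ₗ[ℚ] L →ₗ[ℚ] ℚ) (b : L →ₗ[ℚ] ℚ)
    (hb : ∀ x y, c x y - c' x y = b ⁅x, y⁆) :
    SridharanAlgebra L c ≃ₐ[ℚ] SridharanAlgebra L c' := by
  have hb' : ∀ x y, c' x y - c x y = (-b) ⁅x, y⁆ := by
    intro x y; have := hb x y; simp only [LinearMap.neg_apply]; linarith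
  refine AlgEquiv.ofAlgHom (toHom c c' b hb) (toHom c' c (-b) hb') ?_ ?_
  · refine hom_ext fun x => ?_
    simp only [AlgHom.comp_apply, toHom_ι, map_sub, AlgHom.commutes, AlgHom.id_apply,
      LinearMap.neg_apply, map_neg]
    abel
  · refine hom_ext fun x => ?_
    simp only [AlgHom.comp_apply, toHom_ι, map_sub, AlgHom.commutes, AlgHom.id_apply,
      LinearMap.neg_apply, map_neg]
    abel

lemma toEquiv_ι (c c' : L →ₗ[ℚ] L →ₗ[ℚ] ℚ) (b : L →ₗ[ℚ] ℚ)
    (hb : ∀ x y, c x y - c' x y = b ⁅x, y⁆) (x : L) :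
    toEquiv c c' b hb (ι L c x) = ι L c' x
      + algebraMap ℚ (SridharanAlgebra L c') ((-b) x) := by
  show toHom c c' b hb (ι L c x) = _
  rw [toHom_ι]
  simp [sub_eq_add_neg]

lemma extract (c c' : L →ₗ[ℚ] L →ₗ[ℚ] ℚ) (hc' : Sridharan.IsCocycle L c')
    (φ : SridharanAlgebra L c ≃ₐ[ℚ] SridharanAlgebra L c') (b : L →ₗ[ℚ] ℚ)
    (hφ : ∀ x : L, φ (ι L c x) = ι L c' x + algebraMap ℚ (SridharanAlgebra L c') (b x))
    (x y : L) : c x y - c' x y = (-b) ⁅x, y⁆ := by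
  have H := congrArg φ (rel_eq c x y)
  simp only [map_mul, map_add, AlgEquiv.commutes, hφ] at H
  simp only [add_mul, mul_add] at H
  rw [rel_eq c' x y] at H
  simp only [Algebra.algebraMap_eq_smul_one, smul_mul_assoc, mul_smul_comm,
    smul_smul, one_mul, mul_one, smul_add] at H
  have key : (c' x y - (b ⁅x, y⁆ + c x y)) • (1 : SridharanAlgebra L c') = 0 := by
    linear_combination (norm := module) H
  haveI hnt : Nontrivial (SridharanAlgebra L c') := nontrivial_of_isCocycle c' hc'
  have h0 : algebraMap ℚ (SridharanAlgebra L c') (c' x y - (b ⁅x, y⁆ + c x y)) = 0 := by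
    rw [Algebra.algebraMap_eq_smul_one]; exact key
  have h1 : c' x y - (b ⁅x, y⁆ + c x y) = 0 :=
    (RingHom.injective (algebraMap ℚ (SridharanAlgebra L c'))) (h0.trans (map_zero _).symm)
  simp only [LinearMap.neg_apply]
  linarith

end SridharanAux


open SridharanAlgebra in
/-- Two 2-cocycles `c, c'` of a `ℚ`-Lie algebra `g` define isomorphic Sridharan algebras
`U_c(g) ≅ U_{c'}(g)` — an algebra isomorphism compatible with the canonical maps
`g → U_c(g)` up to adding scalars — if and only if `c` and `c'` are cohomologous, i.e.
`c - c'` is the coboundary `(x,y) ↦ b([x,y])` of a linear form `b : g → ℚ`. -/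
theorem sridharan_iso_iff_cohomologous
    (L : Type*) [LieRing L] [LieAlgebra ℚ L]
    (c c' : L →ₗ[ℚ] L →ₗ[ℚ] ℚ)
    (hc : Sridharan.IsCocycle L c) (hc' : Sridharan.IsCocycle L c') :
    (∃ (φ : SridharanAlgebra L c ≃ₐ[ℚ] SridharanAlgebra L c') (b : L →ₗ[ℚ] ℚ),
      ∀ x : L, φ (ι L c x) = ι L c' x + algebraMap ℚ (SridharanAlgebra L c') (b x))
    ↔ ∃ b : L →ₗ[ℚ] ℚ, ∀ x y : L, c x y - c' x y = b ⁅x, y⁆ := by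
  constructor
  · rintro ⟨φ, b, hφ⟩
    exact ⟨-b, fun x y => SridharanAux.extract c c' hc' φ b hφ x y⟩
  · rintro ⟨b, hb⟩
    exact ⟨SridharanAux.toEquiv c c' b hb, -b, SridharanAux.toEquiv_ι c c' b hb⟩
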